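/- For every integer L ≥ 2, every β ≥ 0 and every ε with 0 < ε ≤ 1/2, the restricted partition function Z^{dis}(β,ε) = ∫_{\{every bond ε-disordered\}} exp(−β H_ε(φ)) dμ(φ) satisfies Z^{dis}(β,ε) ≤ 1, and consequently (Z^{dis}(β,ε) / Z_Λ(β,ε))^{1/(2L²)} ≤ (2/ε)^{1/2} · exp(−β). -/

import Mathlib

open MeasureTheory Real

/-- The site space: the discrete torus of side `L`. -/
abbrev Torus (L : ℕ) := ZMod L × ZMod L

/-- A configuration of the toy model: one circle-valued spin per site. -/
abbrev Config (L : ℕ) := Torus L → AddCircle (1 : ℝ)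

/-- The two unit coordinate vectors `e₁ = (1,0)` and `e₂ = (0,1)`. -/
def coordVec (L : ℕ) : Fin 2 → Torus L
  | 0 => (1, 0)
  | 1 => (0, 1)

/-- The product of normalized Haar measures on the spins. -/
noncomputable def toyMeasure (L : ℕ) [NeZero L] : Measure (Config L) :=
  Measure.pi fun _ => (AddCircle.haarAddCircle : Measure (AddCircle (1 : ℝ)))

/-- A bond `(x, x + eᵢ)` of the configuration `φ` is `ε`-ordered when
`‖φ x - φ (x + eᵢ)‖ ≤ ε/2`, where `‖·‖` is the quotient norm on `ℝ/ℤ`. -/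
def IsOrderedBond (L : ℕ) [NeZero L] (ε : ℝ) (φ : Config L) (x : Torus L) (i : Fin 2) : Prop :=
  ‖φ x - φ (x + coordVec L i)‖ ≤ ε / 2

noncomputable instance (L : ℕ) [NeZero L] (ε : ℝ) (φ : Config L) (x : Torus L) (i : Fin 2) :
    Decidable (IsOrderedBond L ε φ x i) :=
  Real.decidableLE _ _

/-- The toy Hamiltonian: minus the number of `ε`-ordered bonds. -/
noncomputable def toyH (L : ℕ) [NeZero L] (ε : ℝ) (φ : Config L) : ℝ :=
  -(∑ x : Torus L, ∑ i : Fin 2, if IsOrderedBond L ε φ x i then (1 : ℝ) else 0)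

/-- The toy-model partition function. -/
noncomputable def toyZ (L : ℕ) [NeZero L] (β ε : ℝ) : ℝ :=
  ∫ φ, Real.exp (-β * toyH L ε φ) ∂(toyMeasure L)

/-- The disordered-restricted partition function `Z^{dis}`: the integral of the
Boltzmann weight over the configurations all of whose bonds are `ε`-disordered. -/
noncomputable def toyZdis (L : ℕ) [NeZero L] (β ε : ℝ) : ℝ :=
  ∫ φ in {φ : Config L | ∀ x : Torus L, ∀ i : Fin 2, ¬ IsOrderedBond L ε φ x i},
    Real.exp (-β * toyH L ε φ) ∂(toyMeasure L)


section Aux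

variable (L : ℕ) [NeZero L] (β ε : ℝ)

instance toyMeasure_prob : IsProbabilityMeasure (toyMeasure L) := by
  unfold toyMeasure; infer_instance

lemma orderedBond_measurableSet (x : Torus L) (i : Fin 2) :
    MeasurableSet {φ : Config L | IsOrderedBond L ε φ x i} := by
  have h : Measurable fun φ : Config L => ‖φ x - φ (x + coordVec L i)‖ := by
    apply Measurable.norm
    apply Measurable.sub
    · exact measurable_pi_apply _
    · exact measurable_pi_apply _
  simp only [IsOrderedBond]
  exact measurableSet_le h measurable_const

lemma toyH_measurable : Measurable (toyH L ε) := by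
  unfold toyH
  apply Measurable.neg
  refine Finset.measurable_sum _ fun x _ => Finset.measurable_sum _ fun i _ => ?_
  exact Measurable.ite (orderedBond_measurableSet L ε x i) measurable_const measurable_const

lemma card_torus : (Fintype.card (Torus L) : ℝ) = (L : ℝ) ^ 2 := by
  simp [Fintype.card_prod, ZMod.card]
  ring

lemma toyH_bounds (φ : Config L) : -(2 * (L : ℝ) ^ 2) ≤ toyH L ε φ ∧ toyH L ε φ ≤ 0 := by
  unfold toyH
  constructor
  · rw [neg_le_neg_iff]
    calc (∑ x : Torus L, ∑ i : Fin 2, if IsOrderedBond L ε φ x i then (1 : ℝ) else 0)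
        ≤ ∑ x : Torus L, ∑ i : Fin 2, (1 : ℝ) := by
          refine Finset.sum_le_sum fun x _ => Finset.sum_le_sum fun i _ => ?_
          split <;> norm_num
      _ = 2 * (L : ℝ) ^ 2 := by
          simp [Finset.sum_const, Finset.card_univ]
          have := card_torus L
          push_cast at this ⊢
          linarith
  · simp only [neg_nonpos]
    refine Finset.sum_nonneg fun x _ => Finset.sum_nonneg fun i _ => ?_
    split <;> norm_num

lemma toyWeight_integrable (hβ : 0 ≤ β) :
    Integrable (fun φ => Real.exp (-β * toyH L ε φ)) (toyMeasure L) := by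
  have hm : Measurable fun φ : Config L => Real.exp (-β * toyH L ε φ) :=
    (((toyH_measurable L ε).const_mul (-β))).exp
  refine (integrable_const (Real.exp (β * (2 * (L : ℝ) ^ 2)))).mono'
    hm.aestronglyMeasurable (ae_of_all _ fun φ => ?_)
  rw [Real.norm_eq_abs, abs_of_pos (Real.exp_pos _), Real.exp_le_exp]
  have h := (toyH_bounds L ε φ).1
  nlinarith

lemma haar_ball (hε : 0 < ε) (hε' : ε ≤ 1 / 2) :
    (AddCircle.haarAddCircle : Measure (AddCircle (1 : ℝ)))
      (Metric.closedBall 0 (ε / 4)) = ENNReal.ofReal (ε / 2) := by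
  have hv := AddCircle.volume_closedBall (T := 1) (x := (0 : AddCircle (1 : ℝ))) (ε / 4)
  rw [AddCircle.volume_eq_smul_haarAddCircle, Measure.smul_apply, smul_eq_mul,
    ENNReal.ofReal_one, one_mul] at hv
  rw [hv]
  congr 1
  rw [min_eq_right (by linarith)]
  ring

lemma toyZ_lower (hβ : 0 ≤ β) (hε : 0 < ε) (hε' : ε ≤ 1 / 2) :
    (ε / 2) ^ (L ^ 2) * Real.exp (β * (2 * (L : ℝ) ^ 2)) ≤ toyZ L β ε := by
  set B : Set (Config L) :=
    Set.univ.pi fun _ : Torus L => Metric.closedBall (0 : AddCircle (1 : ℝ)) (ε / 4) with hBdef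
  have hB : MeasurableSet B := MeasurableSet.univ_pi fun _ => measurableSet_closedBall
  have hHB : ∀ φ ∈ B, toyH L ε φ = -(2 * (L : ℝ) ^ 2) := by
    intro φ hφ
    have hall : ∀ x i, IsOrderedBond L ε φ x i := by
      intro x i
      have h1 : ‖φ x‖ ≤ ε / 4 := mem_closedBall_zero_iff.mp (hφ x (Set.mem_univ x))
      have h2 : ‖φ (x + coordVec L i)‖ ≤ ε / 4 :=
        mem_closedBall_zero_iff.mp (hφ _ (Set.mem_univ _))
      unfold IsOrderedBond
      calc ‖φ x - φ (x + coordVec L i)‖ ≤ ‖φ x‖ + ‖φ (x + coordVec L i)‖ := norm_sub_le _ _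
        _ ≤ ε / 2 := by linarith
    unfold toyH
    simp only [hall, if_true]
    simp [Finset.sum_const, Finset.card_univ]
    have := card_torus L
    push_cast at this ⊢
    linarith
  have hμB : toyMeasure L B = ENNReal.ofReal (ε / 2) ^ (L ^ 2) := by
    rw [hBdef, toyMeasure, Measure.pi_pi]
    rw [Finset.prod_congr rfl fun x _ => haar_ball ε hε hε']
    rw [Finset.prod_const, Finset.card_univ]
    congr 1
    simp [Fintype.card_prod, ZMod.card]
    ring
  have hset : ∫ φ in B, Real.exp (-β * toyH L ε φ) ∂(toyMeasure L)
      = (ε / 2) ^ (L ^ 2) * Real.exp (β * (2 * (L : ℝ) ^ 2)) := by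
    rw [setIntegral_congr_fun hB (g := fun _ => Real.exp (β * (2 * (L : ℝ) ^ 2)))
      (fun φ hφ => by rw [hHB φ hφ]; ring_nf)]
    rw [setIntegral_const, measureReal_def, hμB, smul_eq_mul]
    rw [ENNReal.toReal_pow, ENNReal.toReal_ofReal (by linarith)]
  rw [← hset]
  exact setIntegral_le_integral (toyWeight_integrable L β ε hβ)
    (ae_of_all _ fun φ => (Real.exp_pos _).le)

lemma toyZdis_le_one (hβ : 0 ≤ β) : toyZdis L β ε ≤ 1 := by
  set D : Set (Config L) :=
    {φ : Config L | ∀ x : Torus L, ∀ i : Fin 2, ¬ IsOrderedBond L ε φ x i} with hDdef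
  have hD : MeasurableSet D := by
    have : D = ⋂ x : Torus L, ⋂ i : Fin 2, {φ : Config L | IsOrderedBond L ε φ x i}ᶜ := by
      ext φ; simp [hDdef]
    rw [this]
    exact MeasurableSet.iInter fun x => MeasurableSet.iInter fun i =>
      (orderedBond_measurableSet L ε x i).compl
  have hHD : ∀ φ ∈ D, toyH L ε φ = 0 := by
    intro φ hφ
    unfold toyH
    simp only [hφ _ _, if_false]
    simp
  have : toyZdis L β ε = (toyMeasure L D).toReal := by
    rw [toyZdis, setIntegral_congr_fun hD (g := fun _ => (1 : ℝ))
      (fun φ hφ => by rw [hHD φ hφ]; simp)]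
    rw [setIntegral_const, smul_eq_mul, mul_one, measureReal_def]
  rw [this]
  exact ENNReal.toReal_le_of_le_ofReal zero_le_one (by simpa using prob_le_one)

lemma toyZdis_nonneg : 0 ≤ toyZdis L β ε :=
  integral_nonneg fun φ => (Real.exp_pos _).le

end Aux

/-- `Z^{dis} ≤ 1` and the per-bond chessboard ratio bound
`(Z^{dis}/Z)^{1/(2L²)} ≤ (2/ε)^{1/2}·exp(−β)`. -/
theorem toy_Zdis_upper_bound (L : ℕ) (hL : 2 ≤ L) (β ε : ℝ)
    (hβ : 0 ≤ β) (hε : 0 < ε) (hε' : ε ≤ 1 / 2) :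
    haveI : NeZero L := ⟨by omega⟩
    toyZdis L β ε ≤ 1 ∧
    (toyZdis L β ε / toyZ L β ε) ^ ((2 * (L : ℝ) ^ 2)⁻¹) ≤
      (2 / ε) ^ ((1 : ℝ) / 2) * Real.exp (-β) := by
  haveI : NeZero L := ⟨by omega⟩
  have hL0 : (L : ℝ) ≠ 0 := by positivity
  have hC : (0:ℝ) < 2 * (L : ℝ) ^ 2 := by positivity
  have h1 : toyZdis L β ε ≤ 1 := toyZdis_le_one L β ε hβ
  refine ⟨h1, ?_⟩
  have hZlow := toyZ_lower L β ε hβ hε hε'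
  have hclow : (0:ℝ) < (ε / 2) ^ (L ^ 2) * Real.exp (β * (2 * (L : ℝ) ^ 2)) := by positivity
  have hZpos : 0 < toyZ L β ε := lt_of_lt_of_le hclow hZlow
  have hdiv : toyZdis L β ε / toyZ L β ε ≤
      (2 / ε) ^ (L ^ 2) * Real.exp (-(β * (2 * (L : ℝ) ^ 2))) := by
    have h2 : toyZdis L β ε / toyZ L β ε ≤
        1 / ((ε / 2) ^ (L ^ 2) * Real.exp (β * (2 * (L : ℝ) ^ 2))) :=
      div_le_div₀ zero_le_one h1 hclow hZlow
    calc toyZdis L β ε / toyZ L β ε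
        ≤ 1 / ((ε / 2) ^ (L ^ 2) * Real.exp (β * (2 * (L : ℝ) ^ 2))) := h2
      _ = (2 / ε) ^ (L ^ 2) * Real.exp (-(β * (2 * (L : ℝ) ^ 2))) := by
          rw [one_div, mul_inv, ← inv_pow, inv_div, ← Real.exp_neg]
  have hmono := Real.rpow_le_rpow (div_nonneg (toyZdis_nonneg L β ε) hZpos.le) hdiv
    (inv_nonneg.mpr hC.le)
  refine hmono.trans_eq ?_
  rw [Real.mul_rpow (by positivity) (Real.exp_pos _).le]
  rw [← Real.rpow_natCast (2 / ε) (L ^ 2), ← Real.rpow_mul (by positivity)]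
  rw [← Real.exp_mul]
  have e1 : ((L ^ 2 : ℕ) : ℝ) * (2 * (L : ℝ) ^ 2)⁻¹ = 1 / 2 := by
    push_cast; field_simp
  have e2 : -(β * (2 * (L : ℝ) ^ 2)) * (2 * (L : ℝ) ^ 2)⁻¹ = -β := by
    field_simp
  rw [e1, e2]
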